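/- Let w be a finite word in the snapshot-memory sequential specification T_snap over n registers such that, for every register k, the values written by the successive occurrences of update(k, ·) in w are strictly increasing and positive. Then the vectors returned by the snapshot operations of w are pairwise pointwise comparable: for any two occurrences of snap(A) and snap(B) in w, either A k ≤ B k for all k, or B k ≤ A k for all k. -/

import Mathlib

/-!
STATEMENT 8: In a word of the snapshot-memory specification in which, for each
register, the successively written values are strictly increasing and
positive, the vectors returned by the snapshot operations are pairwise
pointwise comparable.
-/

/-- Operations of the snapshot memory over `n` registers. -/
inductive SnapOp (n : ℕ) : Type
  | update (k : Fin n) (v : ℕ) : SnapOp n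
  | snap (A : Fin n → ℕ) : SnapOp n

/-- `snapRun M w`: `w` is a correct snapshot-memory behaviour starting from
memory state `M` (every snapshot returns the current state). -/
def snapRun {n : ℕ} : (Fin n → ℕ) → List (SnapOp n) → Prop
  | _, [] => True
  | M, SnapOp.update k v :: l => snapRun (Function.update M k v) l
  | M, SnapOp.snap A :: l => A = M ∧ snapRun M l

/-- The snapshot-memory sequential specification over `n` registers
(all registers initialized to 0). -/
def TSnap (n : ℕ) : Set (List (SnapOp n)) := {w | snapRun (fun _ => 0) w}

/-- The values successively written to register `k` in the word `w`. -/
def updVals {n : ℕ} (k : Fin n) (w : List (SnapOp n)) : List ℕ :=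
  w.filterMap (fun op =>
    match op with
    | SnapOp.update k' v => if k' = k then some v else none
    | SnapOp.snap _ => none)

/-- If `w ∈ TSnap n` and, for every register `k`, the values written by the
successive occurrences of `update(k, ·)` in `w` are strictly increasing and
positive, then the vectors returned by the snapshots of `w` are pairwise
pointwise comparable. -/
lemma updVals_cons_update {n : ℕ} (k k' : Fin n) (v : ℕ) (l : List (SnapOp n)) :
    updVals k (SnapOp.update k' v :: l) =
      if k' = k then v :: updVals k l else updVals k l := by
  by_cases h : k' = k <;> simp [updVals, List.filterMap_cons, h]

lemma updVals_cons_snap {n : ℕ} (k : Fin n) (A : Fin n → ℕ) (l : List (SnapOp n)) :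
    updVals k (SnapOp.snap A :: l) = updVals k l := by
  simp [updVals, List.filterMap_cons]

lemma chain_step {n : ℕ} (M : Fin n → ℕ) (k' : Fin n) (v : ℕ) (l : List (SnapOp n))
    (h : ∀ k, List.Chain' (· < ·) (M k :: updVals k (SnapOp.update k' v :: l))) :
    ∀ k, List.Chain' (· < ·) ((Function.update M k' v) k :: updVals k l) := by
  intro k
  have hk := h k
  rw [updVals_cons_update] at hk
  by_cases hkk : k' = k
  · subst hkk
    simp only [if_pos rfl] at hk
    simpa [Function.update_self, List.Chain'] using hk.tail
  · simp only [if_neg hkk] at hk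
    simpa [Function.update_of_ne (Ne.symm hkk), List.Chain'] using hk

lemma snap_ge {n : ℕ} : ∀ (w : List (SnapOp n)) (M : Fin n → ℕ), snapRun M w →
    (∀ k, List.Chain' (· < ·) (M k :: updVals k w)) →
    ∀ A, SnapOp.snap A ∈ w → ∀ k, M k ≤ A k := by
  intro w
  induction w with
  | nil => intro M _ _ A hA; simp at hA
  | cons op l ih =>
    intro M hrun hch A hA
    cases op with
    | update k' v =>
      have hA' : SnapOp.snap A ∈ l := by simpa using hA
      intro k
      have := ih (Function.update M k' v) hrun (chain_step M k' v l hch) A hA' k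
      by_cases hkk : k' = k
      · subst hkk
        have hv : M k' < v := by
          have := hch k'
          rw [updVals_cons_update, if_pos rfl] at this
          exact List.isChain_cons_cons.mp this |>.1
        calc M k' ≤ v := le_of_lt hv
          _ ≤ A k' := by simpa [Function.update_self] using this
      · simpa [Function.update_of_ne (Ne.symm hkk)] using this
    | snap A' =>
      obtain ⟨hA'M, hrun'⟩ := hrun
      rcases List.mem_cons.mp hA with h | h
      · cases h; intro k; exact le_of_eq (congrFun hA'M k).symm
      · exact ih M hrun' (fun k => by have := hch k; rwa [updVals_cons_snap] at this) A h

lemma snap_comp {n : ℕ} : ∀ (w : List (SnapOp n)) (M : Fin n → ℕ), snapRun M w →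
    (∀ k, List.Chain' (· < ·) (M k :: updVals k w)) →
    ∀ A B, SnapOp.snap A ∈ w → SnapOp.snap B ∈ w →
    (∀ k, A k ≤ B k) ∨ (∀ k, B k ≤ A k) := by
  intro w
  induction w with
  | nil => intro M _ _ A B hA; simp at hA
  | cons op l ih =>
    intro M hrun hch A B hA hB
    cases op with
    | update k' v =>
      exact ih (Function.update M k' v) hrun (chain_step M k' v l hch) A B
        (by simpa using hA) (by simpa using hB)
    | snap A' =>
      obtain ⟨hA'M, hrun'⟩ := hrun
      have hch' : ∀ k, List.Chain' (· < ·) (M k :: updVals k l) := fun k => by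
        have := hch k; rwa [updVals_cons_snap] at this
      rcases List.mem_cons.mp hA with h1 | h1
      · rcases List.mem_cons.mp hB with h2 | h2
        · cases h1; cases h2; exact Or.inl (fun _ => le_rfl)
        · cases h1; subst hA'M
          exact Or.inl (snap_ge l A hrun' hch' B h2)
      · rcases List.mem_cons.mp hB with h2 | h2
        · cases h2; subst hA'M
          exact Or.inr (snap_ge l B hrun' hch' A h1)
        · exact ih M hrun' hch' A B h1 h2

theorem snapshots_comparable {n : ℕ} (w : List (SnapOp n)) (hw : w ∈ TSnap n)
    (hmono : ∀ k : Fin n, (updVals k w).Chain' (· < ·))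
    (hpos : ∀ k : Fin n, ∀ v ∈ updVals k w, 0 < v)
    (A B : Fin n → ℕ) (hA : SnapOp.snap A ∈ w) (hB : SnapOp.snap B ∈ w) :
    (∀ k, A k ≤ B k) ∨ (∀ k, B k ≤ A k) := by
  exact snap_comp w (fun _ => 0) hw
    (fun k => List.isChain_cons.mpr ⟨fun y hy => hpos k y (List.mem_of_mem_head? hy), hmono k⟩)
    A B hA hB
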